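/- There exists no 4×8 matrix λ over ℤ/2 of the form (I₄ | A) such that for every subset {i₁,i₂,i₃,i₄} ⊆ {1,…,8} satisfying Gale's dual evenness condition for C⁴(8)* (i.e. the subset is a disjoint union of intervals I_j = {j, j+1} ∩ {1,…,8} for j ∈ {0,…,8}), the corresponding 4×4 minor of λ is nonzero in ℤ/2. -/

import Mathlib

/-- The 4×4 minor of a (4 × ℕ-indexed, 1-based columns) `ℤ/2`-matrix on columns `a,b,c,d`. -/
def minor4 (lam : Fin 4 → ℕ → ZMod 2) (a b c d : ℕ) : ZMod 2 :=
  Matrix.det (Matrix.of fun (p q : Fin 4) => lam p (![a, b, c, d] q))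


def det4e (M : Matrix (Fin 4) (Fin 4) (ZMod 2)) : ZMod 2 :=
  M 0 0*M 1 1*M 2 2*M 3 3 - M 0 0*M 1 1*M 2 3*M 3 2 - M 0 0*M 1 2*M 2 1*M 3 3 + M 0 0*M 1 2*M 2 3*M 3 1 + M 0 0*M 1 3*M 2 1*M 3 2 - M 0 0*M 1 3*M 2 2*M 3 1 - M 0 1*M 1 0*M 2 2*M 3 3 + M 0 1*M 1 0*M 2 3*M 3 2 + M 0 1*M 1 2*M 2 0*M 3 3 - M 0 1*M 1 2*M 2 3*M 3 0 - M 0 1*M 1 3*M 2 0*M 3 2 + M 0 1*M 1 3*M 2 2*M 3 0 + M 0 2*M 1 0*M 2 1*M 3 3 - M 0 2*M 1 0*M 2 3*M 3 1 - M 0 2*M 1 1*M 2 0*M 3 3 + M 0 2*M 1 1*M 2 3*M 3 0 + M 0 2*M 1 3*M 2 0*M 3 1 - M 0 2*M 1 3*M 2 1*M 3 0 - M 0 3*M 1 0*M 2 1*M 3 2 + M 0 3*M 1 0*M 2 2*M 3 1 + M 0 3*M 1 1*M 2 0*M 3 2 - M 0 3*M 1 1*M 2 2*M 3 0 - M 0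 3*M 1 2*M 2 0*M 3 1 + M 0 3*M 1 2*M 2 1*M 3 0

lemma det4e_eq (M : Matrix (Fin 4) (Fin 4) (ZMod 2)) : M.det = det4e M := by
  simp [Matrix.det_succ_row_zero, Fin.sum_univ_succ, Matrix.det_fin_one, Fin.succAbove]
  unfold det4e
  simp only [sub_eq_add_neg, ZMod.neg_eq_self_mod_two]
  ring

set_option maxHeartbeats 10000000 in
set_option synthInstance.maxSize 10000 in
set_option maxRecDepth 100000 in
lemma key : ∀ v5 : Fin 4 → ZMod 2,
    (det4e (Matrix.of ![![1, 0, 0, v5 0], ![0, 1, 0, v5 1], ![0, 0, 0, v5 2], ![0, 0, 1, v5 3]]) ≠ 0 ∧ det4e (Matrix.of ![![0, 0, 0, v5 0], ![1, 0, 0, v5 1], ![0, 1, 0, v5 2], ![0, 0, 1, v5 3]]) ≠ 0) →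
    ∀ v6 : Fin 4 → ZMod 2,
    (det4e (Matrix.of ![![1, 0, v5 0, v6 0], ![0, 1, v5 1, v6 1], ![0, 0, v5 2, v6 2], ![0, 0, v5 3, v6 3]]) ≠ 0 ∧ det4e (Matrix.of ![![0, 0, v5 0, v6 0], ![1, 0, v5 1, v6 1], ![0, 1, v5 2, v6 2], ![0, 0, v5 3, v6 3]]) ≠ 0 ∧ det4e (Matrix.of ![![0, 0, v5 0, v6 0], ![0, 0, v5 1, v6 1], ![1, 0, v5 2, v6 2], ![0, 1, v5 3, v6 3]]) ≠ 0) →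
    ∀ v7 : Fin 4 → ZMod 2,
    (det4e (Matrix.of ![![1, 0, v6 0, v7 0], ![0, 1, v6 1, v7 1], ![0, 0, v6 2, v7 2], ![0, 0, v6 3, v7 3]]) ≠ 0 ∧ det4e (Matrix.of ![![0, 0, v6 0, v7 0], ![1, 0, v6 1, v7 1], ![0, 1, v6 2, v7 2], ![0, 0, v6 3, v7 3]]) ≠ 0 ∧ det4e (Matrix.of ![![0, 0, v6 0, v7 0], ![0, 0, v6 1, v7 1], ![1, 0, v6 2, v7 2], ![0, 1, v6 3, v7 3]]) ≠ 0 ∧ det4e (Matrix.of ![![0, v5 0, v6 0, v7 0], ![0, v5 1, v6 1, v7 1], ![0, v5 2, v6 2, v7 2], ![1, v5 3, v6 3, v7 3]]) ≠ 0) →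
    ∀ v8 : Fin 4 → ZMod 2,
    (det4e (Matrix.of ![![1, 0, v7 0, v8 0], ![0, 1, v7 1, v8 1], ![0, 0, v7 2, v8 2], ![0, 0, v7 3, v8 3]]) ≠ 0 ∧ det4e (Matrix.of ![![0, 0, v7 0, v8 0], ![1, 0, v7 1, v8 1], ![0, 1, v7 2, v8 2], ![0, 0, v7 3, v8 3]]) ≠ 0 ∧ det4e (Matrix.of ![![0, 0, v7 0, v8 0], ![0, 0, v7 1, v8 1], ![1, 0, v7 2, v8 2], ![0, 1, v7 3, v8 3]]) ≠ 0 ∧ det4e (Matrix.of ![![0, v5 0, v7 0, v8 0], ![0, v5 1, v7 1, v8 1], ![0, v5 2, v7 2, v8 2], ![1, v5 3, v7 3, v8 3]]) ≠ 0 ∧ det4e (Matrix.of ![![v5 0, v6 0, v7 0, v8 0], ![v5 1, v6 1, v7 1, v8 1], ![v5 2, v6 2, v7 2, v8 2], ![v5 3, v6 3, v7 3, v8 3]]) ≠ 0 ∧ det4e (Matrix.of ![![1, 0, 0, v8 0], ![0, 1, 0, v8 1], ![0, 0, 1, v8 2], ![0, 0, 0, v8 3]]) ≠ 0 ∧ det4e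 (Matrix.of ![![1, 0, 0, v8 0], ![0, 0, 0, v8 1], ![0, 1, 0, v8 2], ![0, 0, 1, v8 3]]) ≠ 0 ∧ det4e (Matrix.of ![![1, 0, v5 0, v8 0], ![0, 0, v5 1, v8 1], ![0, 0, v5 2, v8 2], ![0, 1, v5 3, v8 3]]) ≠ 0 ∧ det4e (Matrix.of ![![1, v5 0, v6 0, v8 0], ![0, v5 1, v6 1, v8 1], ![0, v5 2, v6 2, v8 2], ![0, v5 3, v6 3, v8 3]]) ≠ 0 ∧ det4e (Matrix.of ![![1, v6 0, v7 0, v8 0], ![0, v6 1, v7 1, v8 1], ![0, v6 2, v7 2, v8 2], ![0, v6 3, v7 3, v8 3]]) ≠ 0) → False := by decide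

set_option maxHeartbeats 4000000 in
/-- There is no real characteristic matrix of the form `(I₄ | A)` on `C⁴(8)*`:
no 4×8 matrix over `ℤ/2` whose first four columns form the identity and whose 4×4 minors
on all maximal simplices of `K_{C⁴(8)*}` (the sets `{1,i,i+1,8}` for `2 ≤ i ≤ 6` and
`{i,i+1,j,j+1}` for `1 ≤ i < j-1 ≤ 6`, the disjoint unions of Gale intervals) are nonzero. -/
theorem stmt_4 :
    ¬ ∃ lam : Fin 4 → ℕ → ZMod 2,
      (∀ i j : Fin 4, lam i ((j : ℕ) + 1) = if i = j then 1 else 0) ∧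
      (∀ i : ℕ, 2 ≤ i → i ≤ 6 → minor4 lam 1 i (i + 1) 8 ≠ 0) ∧
      (∀ i j : ℕ, 1 ≤ i → i + 1 < j → j ≤ 7 → minor4 lam i (i + 1) j (j + 1) ≠ 0) := by
  rintro ⟨lam, h1, h2, h3⟩
  have e1 : ∀ p : Fin 4, lam p 1 = if p = 0 then 1 else 0 := fun p => h1 p 0
  have e2 : ∀ p : Fin 4, lam p 2 = if p = 1 then 1 else 0 := fun p => h1 p 1
  have e3 : ∀ p : Fin 4, lam p 3 = if p = 2 then 1 else 0 := fun p => h1 p 2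
  have e4 : ∀ p : Fin 4, lam p 4 = if p = 3 then 1 else 0 := fun p => h1 p 3
  set v5 : Fin 4 → ZMod 2 := fun p => lam p 5 with hv5
  set v6 : Fin 4 → ZMod 2 := fun p => lam p 6 with hv6
  set v7 : Fin 4 → ZMod 2 := fun p => lam p 7 with hv7
  set v8 : Fin 4 → ZMod 2 := fun p => lam p 8 with hv8
  have k1245 : det4e (Matrix.of ![![1, 0, 0, v5 0], ![0, 1, 0, v5 1], ![0, 0, 0, v5 2], ![0, 0, 1, v5 3]]) ≠ 0 := by
    have h := h3 1 4 (by norm_num) (by norm_num) (by norm_num)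
    rwa [minor4, show (Matrix.of fun (p q : Fin 4) => lam p (![1, 2, 4, 5] q)) = (Matrix.of ![![1, 0, 0, v5 0], ![0, 1, 0, v5 1], ![0, 0, 0, v5 2], ![0, 0, 1, v5 3]]) from by
      ext p q; fin_cases p <;> fin_cases q <;> simp [e1, e2, e3, e4, hv5, hv6, hv7, hv8, Matrix.vecHead, Matrix.vecTail], det4e_eq] at h
  have k2345 : det4e (Matrix.of ![![0, 0, 0, v5 0], ![1, 0, 0, v5 1], ![0, 1, 0, v5 2], ![0, 0, 1, v5 3]]) ≠ 0 := by
    have h := h3 2 4 (by norm_num) (by norm_num) (by norm_num)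
    rwa [minor4, show (Matrix.of fun (p q : Fin 4) => lam p (![2, 3, 4, 5] q)) = (Matrix.of ![![0, 0, 0, v5 0], ![1, 0, 0, v5 1], ![0, 1, 0, v5 2], ![0, 0, 1, v5 3]]) from by
      ext p q; fin_cases p <;> fin_cases q <;> simp [e1, e2, e3, e4, hv5, hv6, hv7, hv8, Matrix.vecHead, Matrix.vecTail], det4e_eq] at h
  have k1256 : det4e (Matrix.of ![![1, 0, v5 0, v6 0], ![0, 1, v5 1, v6 1], ![0, 0, v5 2, v6 2], ![0, 0, v5 3, v6 3]]) ≠ 0 := by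
    have h := h3 1 5 (by norm_num) (by norm_num) (by norm_num)
    rwa [minor4, show (Matrix.of fun (p q : Fin 4) => lam p (![1, 2, 5, 6] q)) = (Matrix.of ![![1, 0, v5 0, v6 0], ![0, 1, v5 1, v6 1], ![0, 0, v5 2, v6 2], ![0, 0, v5 3, v6 3]]) from by
      ext p q; fin_cases p <;> fin_cases q <;> simp [e1, e2, e3, e4, hv5, hv6, hv7, hv8, Matrix.vecHead, Matrix.vecTail], det4e_eq] at h
  have k2356 : det4e (Matrix.of ![![0, 0, v5 0, v6 0], ![1, 0, v5 1, v6 1], ![0, 1, v5 2, v6 2], ![0, 0, v5 3, v6 3]]) ≠ 0 := by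
    have h := h3 2 5 (by norm_num) (by norm_num) (by norm_num)
    rwa [minor4, show (Matrix.of fun (p q : Fin 4) => lam p (![2, 3, 5, 6] q)) = (Matrix.of ![![0, 0, v5 0, v6 0], ![1, 0, v5 1, v6 1], ![0, 1, v5 2, v6 2], ![0, 0, v5 3, v6 3]]) from by
      ext p q; fin_cases p <;> fin_cases q <;> simp [e1, e2, e3, e4, hv5, hv6, hv7, hv8, Matrix.vecHead, Matrix.vecTail], det4e_eq] at h
  have k3456 : det4e (Matrix.of ![![0, 0, v5 0, v6 0], ![0, 0, v5 1, v6 1], ![1, 0, v5 2, v6 2], ![0, 1, v5 3, v6 3]]) ≠ 0 := by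
    have h := h3 3 5 (by norm_num) (by norm_num) (by norm_num)
    rwa [minor4, show (Matrix.of fun (p q : Fin 4) => lam p (![3, 4, 5, 6] q)) = (Matrix.of ![![0, 0, v5 0, v6 0], ![0, 0, v5 1, v6 1], ![1, 0, v5 2, v6 2], ![0, 1, v5 3, v6 3]]) from by
      ext p q; fin_cases p <;> fin_cases q <;> simp [e1, e2, e3, e4, hv5, hv6, hv7, hv8, Matrix.vecHead, Matrix.vecTail], det4e_eq] at h
  have k1267 : det4e (Matrix.of ![![1, 0, v6 0, v7 0], ![0, 1, v6 1, v7 1], ![0, 0, v6 2, v7 2], ![0, 0, v6 3, v7 3]]) ≠ 0 := by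
    have h := h3 1 6 (by norm_num) (by norm_num) (by norm_num)
    rwa [minor4, show (Matrix.of fun (p q : Fin 4) => lam p (![1, 2, 6, 7] q)) = (Matrix.of ![![1, 0, v6 0, v7 0], ![0, 1, v6 1, v7 1], ![0, 0, v6 2, v7 2], ![0, 0, v6 3, v7 3]]) from by
      ext p q; fin_cases p <;> fin_cases q <;> simp [e1, e2, e3, e4, hv5, hv6, hv7, hv8, Matrix.vecHead, Matrix.vecTail], det4e_eq] at h
  have k2367 : det4e (Matrix.of ![![0, 0, v6 0, v7 0], ![1, 0, v6 1, v7 1], ![0, 1, v6 2, v7 2], ![0, 0, v6 3, v7 3]]) ≠ 0 := by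
    have h := h3 2 6 (by norm_num) (by norm_num) (by norm_num)
    rwa [minor4, show (Matrix.of fun (p q : Fin 4) => lam p (![2, 3, 6, 7] q)) = (Matrix.of ![![0, 0, v6 0, v7 0], ![1, 0, v6 1, v7 1], ![0, 1, v6 2, v7 2], ![0, 0, v6 3, v7 3]]) from by
      ext p q; fin_cases p <;> fin_cases q <;> simp [e1, e2, e3, e4, hv5, hv6, hv7, hv8, Matrix.vecHead, Matrix.vecTail], det4e_eq] at h
  have k3467 : det4e (Matrix.of ![![0, 0, v6 0, v7 0], ![0, 0, v6 1, v7 1], ![1, 0, v6 2, v7 2], ![0, 1, v6 3, v7 3]]) ≠ 0 := by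
    have h := h3 3 6 (by norm_num) (by norm_num) (by norm_num)
    rwa [minor4, show (Matrix.of fun (p q : Fin 4) => lam p (![3, 4, 6, 7] q)) = (Matrix.of ![![0, 0, v6 0, v7 0], ![0, 0, v6 1, v7 1], ![1, 0, v6 2, v7 2], ![0, 1, v6 3, v7 3]]) from by
      ext p q; fin_cases p <;> fin_cases q <;> simp [e1, e2, e3, e4, hv5, hv6, hv7, hv8, Matrix.vecHead, Matrix.vecTail], det4e_eq] at h
  have k4567 : det4e (Matrix.of ![![0, v5 0, v6 0, v7 0], ![0, v5 1, v6 1, v7 1], ![0, v5 2, v6 2, v7 2], ![1, v5 3, v6 3, v7 3]]) ≠ 0 := by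
    have h := h3 4 6 (by norm_num) (by norm_num) (by norm_num)
    rwa [minor4, show (Matrix.of fun (p q : Fin 4) => lam p (![4, 5, 6, 7] q)) = (Matrix.of ![![0, v5 0, v6 0, v7 0], ![0, v5 1, v6 1, v7 1], ![0, v5 2, v6 2, v7 2], ![1, v5 3, v6 3, v7 3]]) from by
      ext p q; fin_cases p <;> fin_cases q <;> simp [e1, e2, e3, e4, hv5, hv6, hv7, hv8, Matrix.vecHead, Matrix.vecTail], det4e_eq] at h
  have k1278 : det4e (Matrix.of ![![1, 0, v7 0, v8 0], ![0, 1, v7 1, v8 1], ![0, 0, v7 2, v8 2], ![0, 0, v7 3, v8 3]]) ≠ 0 := by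
    have h := h3 1 7 (by norm_num) (by norm_num) (by norm_num)
    rwa [minor4, show (Matrix.of fun (p q : Fin 4) => lam p (![1, 2, 7, 8] q)) = (Matrix.of ![![1, 0, v7 0, v8 0], ![0, 1, v7 1, v8 1], ![0, 0, v7 2, v8 2], ![0, 0, v7 3, v8 3]]) from by
      ext p q; fin_cases p <;> fin_cases q <;> simp [e1, e2, e3, e4, hv5, hv6, hv7, hv8, Matrix.vecHead, Matrix.vecTail], det4e_eq] at h
  have k2378 : det4e (Matrix.of ![![0, 0, v7 0, v8 0], ![1, 0, v7 1, v8 1], ![0, 1, v7 2, v8 2], ![0, 0, v7 3, v8 3]]) ≠ 0 := by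
    have h := h3 2 7 (by norm_num) (by norm_num) (by norm_num)
    rwa [minor4, show (Matrix.of fun (p q : Fin 4) => lam p (![2, 3, 7, 8] q)) = (Matrix.of ![![0, 0, v7 0, v8 0], ![1, 0, v7 1, v8 1], ![0, 1, v7 2, v8 2], ![0, 0, v7 3, v8 3]]) from by
      ext p q; fin_cases p <;> fin_cases q <;> simp [e1, e2, e3, e4, hv5, hv6, hv7, hv8, Matrix.vecHead, Matrix.vecTail], det4e_eq] at h
  have k3478 : det4e (Matrix.of ![![0, 0, v7 0, v8 0], ![0, 0, v7 1, v8 1], ![1, 0, v7 2, v8 2], ![0, 1, v7 3, v8 3]]) ≠ 0 := by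
    have h := h3 3 7 (by norm_num) (by norm_num) (by norm_num)
    rwa [minor4, show (Matrix.of fun (p q : Fin 4) => lam p (![3, 4, 7, 8] q)) = (Matrix.of ![![0, 0, v7 0, v8 0], ![0, 0, v7 1, v8 1], ![1, 0, v7 2, v8 2], ![0, 1, v7 3, v8 3]]) from by
      ext p q; fin_cases p <;> fin_cases q <;> simp [e1, e2, e3, e4, hv5, hv6, hv7, hv8, Matrix.vecHead, Matrix.vecTail], det4e_eq] at h
  have k4578 : det4e (Matrix.of ![![0, v5 0, v7 0, v8 0], ![0, v5 1, v7 1, v8 1], ![0, v5 2, v7 2, v8 2], ![1, v5 3, v7 3, v8 3]]) ≠ 0 := by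
    have h := h3 4 7 (by norm_num) (by norm_num) (by norm_num)
    rwa [minor4, show (Matrix.of fun (p q : Fin 4) => lam p (![4, 5, 7, 8] q)) = (Matrix.of ![![0, v5 0, v7 0, v8 0], ![0, v5 1, v7 1, v8 1], ![0, v5 2, v7 2, v8 2], ![1, v5 3, v7 3, v8 3]]) from by
      ext p q; fin_cases p <;> fin_cases q <;> simp [e1, e2, e3, e4, hv5, hv6, hv7, hv8, Matrix.vecHead, Matrix.vecTail], det4e_eq] at h
  have k5678 : det4e (Matrix.of ![![v5 0, v6 0, v7 0, v8 0], ![v5 1, v6 1, v7 1, v8 1], ![v5 2, v6 2, v7 2, v8 2], ![v5 3, v6 3, v7 3, v8 3]]) ≠ 0 := by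
    have h := h3 5 7 (by norm_num) (by norm_num) (by norm_num)
    rwa [minor4, show (Matrix.of fun (p q : Fin 4) => lam p (![5, 6, 7, 8] q)) = (Matrix.of ![![v5 0, v6 0, v7 0, v8 0], ![v5 1, v6 1, v7 1, v8 1], ![v5 2, v6 2, v7 2, v8 2], ![v5 3, v6 3, v7 3, v8 3]]) from by
      ext p q; fin_cases p <;> fin_cases q <;> simp [e1, e2, e3, e4, hv5, hv6, hv7, hv8, Matrix.vecHead, Matrix.vecTail], det4e_eq] at h
  have k1238 : det4e (Matrix.of ![![1, 0, 0, v8 0], ![0, 1, 0, v8 1], ![0, 0, 1, v8 2], ![0, 0, 0, v8 3]]) ≠ 0 := by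
    have h := h2 2 (by norm_num) (by norm_num)
    rwa [minor4, show (Matrix.of fun (p q : Fin 4) => lam p (![1, 2, 3, 8] q)) = (Matrix.of ![![1, 0, 0, v8 0], ![0, 1, 0, v8 1], ![0, 0, 1, v8 2], ![0, 0, 0, v8 3]]) from by
      ext p q; fin_cases p <;> fin_cases q <;> simp [e1, e2, e3, e4, hv5, hv6, hv7, hv8, Matrix.vecHead, Matrix.vecTail], det4e_eq] at h
  have k1348 : det4e (Matrix.of ![![1, 0, 0, v8 0], ![0, 0, 0, v8 1], ![0, 1, 0, v8 2], ![0, 0, 1, v8 3]]) ≠ 0 := by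
    have h := h2 3 (by norm_num) (by norm_num)
    rwa [minor4, show (Matrix.of fun (p q : Fin 4) => lam p (![1, 3, 4, 8] q)) = (Matrix.of ![![1, 0, 0, v8 0], ![0, 0, 0, v8 1], ![0, 1, 0, v8 2], ![0, 0, 1, v8 3]]) from by
      ext p q; fin_cases p <;> fin_cases q <;> simp [e1, e2, e3, e4, hv5, hv6, hv7, hv8, Matrix.vecHead, Matrix.vecTail], det4e_eq] at h
  have k1458 : det4e (Matrix.of ![![1, 0, v5 0, v8 0], ![0, 0, v5 1, v8 1], ![0, 0, v5 2, v8 2], ![0, 1, v5 3, v8 3]]) ≠ 0 := by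
    have h := h2 4 (by norm_num) (by norm_num)
    rwa [minor4, show (Matrix.of fun (p q : Fin 4) => lam p (![1, 4, 5, 8] q)) = (Matrix.of ![![1, 0, v5 0, v8 0], ![0, 0, v5 1, v8 1], ![0, 0, v5 2, v8 2], ![0, 1, v5 3, v8 3]]) from by
      ext p q; fin_cases p <;> fin_cases q <;> simp [e1, e2, e3, e4, hv5, hv6, hv7, hv8, Matrix.vecHead, Matrix.vecTail], det4e_eq] at h
  have k1568 : det4e (Matrix.of ![![1, v5 0, v6 0, v8 0], ![0, v5 1, v6 1, v8 1], ![0, v5 2, v6 2, v8 2], ![0, v5 3, v6 3, v8 3]]) ≠ 0 := by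
    have h := h2 5 (by norm_num) (by norm_num)
    rwa [minor4, show (Matrix.of fun (p q : Fin 4) => lam p (![1, 5, 6, 8] q)) = (Matrix.of ![![1, v5 0, v6 0, v8 0], ![0, v5 1, v6 1, v8 1], ![0, v5 2, v6 2, v8 2], ![0, v5 3, v6 3, v8 3]]) from by
      ext p q; fin_cases p <;> fin_cases q <;> simp [e1, e2, e3, e4, hv5, hv6, hv7, hv8, Matrix.vecHead, Matrix.vecTail], det4e_eq] at h
  have k1678 : det4e (Matrix.of ![![1, v6 0, v7 0, v8 0], ![0, v6 1, v7 1, v8 1], ![0, v6 2, v7 2, v8 2], ![0, v6 3, v7 3, v8 3]]) ≠ 0 := by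
    have h := h2 6 (by norm_num) (by norm_num)
    rwa [minor4, show (Matrix.of fun (p q : Fin 4) => lam p (![1, 6, 7, 8] q)) = (Matrix.of ![![1, v6 0, v7 0, v8 0], ![0, v6 1, v7 1, v8 1], ![0, v6 2, v7 2, v8 2], ![0, v6 3, v7 3, v8 3]]) from by
      ext p q; fin_cases p <;> fin_cases q <;> simp [e1, e2, e3, e4, hv5, hv6, hv7, hv8, Matrix.vecHead, Matrix.vecTail], det4e_eq] at h
  exact key v5 ⟨k1245, k2345⟩ v6 ⟨k1256, k2356, k3456⟩ v7 ⟨k1267, k2367, k3467, k4567⟩ v8 ⟨k1278, k2378, k3478, k4578, k5678, k1238, k1348, k1458, k1568, k1678⟩
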